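/- Let $p_1,\dots,p_n$ be distinct complex numbers and $\sigma_1,\dots,\sigma_n$ real numbers satisfying $-\overline{v} + i\omega\overline{p_j} + \frac{1}{2\pi i}\sum_{k\neq j}\frac{\sigma_k}{p_j - p_k} = 0$ for all $j$. Then $\overline{v}\sum_j \sigma_j p_j - i\omega\sum_j \sigma_j |p_j|^2 = \frac{1}{4\pi i}\left[\left(\sum_k \sigma_k\right)^2 - \sum_k \sigma_k^2\right]$. -/

import Mathlib

open Finset Complex

theorem second_moment_identity (n : ℕ) (p : Fin n → ℂ) (σ : Fin n → ℝ)
    (v : ℂ) (ω : ℝ) (hp : Function.Injective p)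
    (hbal : ∀ j, -(starRingEnd ℂ) v + Complex.I * (ω : ℂ) * (starRingEnd ℂ) (p j)
      + (1 / (2 * (Real.pi : ℂ) * Complex.I)) *
        ∑ k ∈ Finset.univ.erase j, (σ k : ℂ) / (p j - p k) = 0) :
    (starRingEnd ℂ) v * (∑ j, (σ j : ℂ) * p j)
      - Complex.I * (ω : ℂ) * ∑ j, (σ j : ℂ) * ((‖p j‖ : ℝ) : ℂ)^2
    = (1 / (4 * (Real.pi : ℂ) * Complex.I)) *
        ((∑ k, (σ k : ℂ))^2 - ∑ k, (σ k : ℂ)^2) := by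
  have hπ : (Real.pi : ℂ) ≠ 0 := by exact_mod_cast Real.pi_ne_zero
  have hI : Complex.I ≠ 0 := Complex.I_ne_zero
  set c : ℂ := 1 / (2 * (Real.pi : ℂ) * Complex.I) with hc
  set f : Fin n → Fin n → ℂ := fun j k => (σ j : ℂ) * (σ k : ℂ) * (p j / (p j - p k)) with hf
  set T : ℂ := ∑ j, ∑ k ∈ Finset.univ.erase j, f j k with hT
  -- swap symmetry
  have hswap : T = ∑ j, ∑ k ∈ Finset.univ.erase j, f k j := by
    rw [hT]
    apply Finset.sum_comm'
    intro j k
    simp [Finset.mem_erase, eq_comm, and_comm]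
  -- 2T = (∑σ)² - ∑σ²
  have h2T : 2 * T = (∑ k, (σ k : ℂ))^2 - ∑ k, (σ k : ℂ)^2 := by
    have : 2 * T = ∑ j, ∑ k ∈ Finset.univ.erase j, (f j k + f k j) := by
      rw [two_mul]
      nth_rewrite 2 [hswap]
      rw [← Finset.sum_add_distrib]
      apply Finset.sum_congr rfl
      intro j _
      rw [← Finset.sum_add_distrib]
    rw [this]
    have step : ∀ j, ∑ k ∈ Finset.univ.erase j, (f j k + f k j)
        = (σ j : ℂ) * ((∑ k, (σ k : ℂ)) - (σ j : ℂ)) := by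
      intro j
      have : ∑ k ∈ Finset.univ.erase j, (f j k + f k j)
          = ∑ k ∈ Finset.univ.erase j, (σ j : ℂ) * (σ k : ℂ) := by
        apply Finset.sum_congr rfl
        intro k hk
        have hne : p j ≠ p k := fun h => (Finset.mem_erase.mp hk).1 (hp h).symm
        have hsub : p j - p k ≠ 0 := sub_ne_zero.mpr hne
        have hsub' : p k - p j ≠ 0 := sub_ne_zero.mpr (Ne.symm hne)
        simp only [hf]
        field_simp
        ring
      rw [this, ← Finset.mul_sum, Finset.sum_erase_eq_sub (Finset.mem_univ j)]
    rw [Finset.sum_congr rfl (fun j _ => step j)]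
    rw [Finset.sum_congr rfl (fun j _ => mul_sub (σ j : ℂ) _ _), Finset.sum_sub_distrib,
      ← Finset.sum_mul, sq]
    congr 1
    exact Finset.sum_congr rfl (fun j _ => (sq ((σ j : ℂ))).symm)
  -- key: sum of balance times σ_j p_j
  have habs : ∀ j, ((‖p j‖ : ℝ) : ℂ)^2 = (starRingEnd ℂ) (p j) * p j := by
    intro j
    rw [show ((‖p j‖ : ℝ) : ℂ)^2 = ((‖p j‖^2 : ℝ) : ℂ) by push_cast; ring,
      Complex.sq_norm, Complex.normSq_eq_conj_mul_self]
  have key : c * T = (starRingEnd ℂ) v * (∑ j, (σ j : ℂ) * p j)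
      - Complex.I * (ω : ℂ) * ∑ j, (σ j : ℂ) * ((‖p j‖ : ℝ) : ℂ)^2 := by
    rw [hT, Finset.mul_sum, Finset.mul_sum, Finset.mul_sum, ← Finset.sum_sub_distrib]
    apply Finset.sum_congr rfl
    intro j _
    have hb := hbal j
    have hsum : ∑ k ∈ Finset.univ.erase j, f j k
        = (σ j : ℂ) * p j * ∑ k ∈ Finset.univ.erase j, (σ k : ℂ) / (p j - p k) := by
      rw [Finset.mul_sum]
      apply Finset.sum_congr rfl
      intro k _
      simp only [hf]
      ring
    rw [hsum, habs j]
    linear_combination (σ j : ℂ) * p j * hb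
  have hc4 : (1 / (4 * (Real.pi : ℂ) * Complex.I)) * (2 : ℂ) = c := by
    rw [hc]
    field_simp
    ring
  calc (starRingEnd ℂ) v * (∑ j, (σ j : ℂ) * p j)
      - Complex.I * (ω : ℂ) * ∑ j, (σ j : ℂ) * ((‖p j‖ : ℝ) : ℂ)^2
      = c * T := key.symm
    _ = (1 / (4 * (Real.pi : ℂ) * Complex.I)) * (2 * T) := by
        rw [← mul_assoc, mul_comm (1 / (4 * (Real.pi : ℂ) * Complex.I)) 2,
          mul_comm 2 _] at *
        rw [hc4]
    _ = _ := by rw [h2T]
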